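/- Let r, s be coprime nonzero integers with r^2+4s ≠ 0, let α, β be the roots of x^2 - rx - s = 0 with |α| ≥ |β|, and assume α/β is not a root of unity. Let U_0 = 0, U_1 = 1, U_{n+2} = r·U_{n+1} + s·U_n. Suppose n ≥ 150 and |U_n| = m_1!·m_2!⋯m_k! with 1 < m_1 ≤ ⋯ ≤ m_k, and set M_n = ∏_{p prime, p ≡ ±1 (mod n)} p^{v_p(U_n)}. Then log M_n ≤ Σ_{i : m_i ≥ n-1} (m_i − 1) · Σ_{p prime, p ≤ m_i, p ≡ ±1 (mod n)} (log p)/(p − 1). -/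

import Mathlib

/-- If `n ≥ 150` and `|U n| = m₁! ⋯ m_k!` with `1 < m₁ ≤ ⋯ ≤ m_k`, then
`log M_n ≤ Σ_{i : mᵢ ≥ n−1} (mᵢ − 1) Σ_{p ≤ mᵢ, p ≡ ±1 (mod n)} log p/(p−1)`. -/
theorem log_Mn_upper_bound_via_prime_sums
    (r s : ℤ) (hr : r ≠ 0) (hs : s ≠ 0) (hrs : IsCoprime r s)
    (hdisc : r ^ 2 + 4 * s ≠ 0)
    (α β : ℂ) (hsum : α + β = (r : ℂ)) (hprod : α * β = -(s : ℂ))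
    (habs : ‖β‖ ≤ ‖α‖)
    (hnru : ∀ k : ℕ, 0 < k → (α / β) ^ k ≠ 1)
    (U : ℕ → ℤ) (hU0 : U 0 = 0) (hU1 : U 1 = 1)
    (hUrec : ∀ n : ℕ, U (n + 2) = r * U (n + 1) + s * U n)
    (n : ℕ) (hn : 150 ≤ n)
    (k : ℕ) (hk : 1 ≤ k) (m : Fin k → ℕ)
    (hm1 : ∀ i, 1 < m i) (hmono : Monotone m)
    (hfac : (U n).natAbs = ∏ i, Nat.factorial (m i))
    (M : ℕ)
    (hM : M = ∏ p ∈ (U n).natAbs.primeFactors.filter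
        (fun p : ℕ => (p : ZMod n) = 1 ∨ (p : ZMod n) = -1),
        p ^ (U n).natAbs.factorization p) :
    Real.log M ≤
      ∑ i ∈ Finset.univ.filter (fun i => n - 1 ≤ m i),
        ((m i : ℝ) - 1) *
          ∑ p ∈ (Finset.range (m i + 1)).filter
              (fun p : ℕ => p.Prime ∧ ((p : ZMod n) = 1 ∨ (p : ZMod n) = -1)),
            Real.log p / ((p : ℝ) - 1) := by
    classical
  set N := (U n).natAbs with hNdef
  set S := N.primeFactors.filter
      (fun p : ℕ => (p : ZMod n) = 1 ∨ (p : ZMod n) = -1) with hSdef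
  have hfacne : ∀ i : Fin k, Nat.factorial (m i) ≠ 0 := fun i => (Nat.factorial_pos _).ne'
  have hSprime : ∀ p ∈ S, p.Prime := fun p hp =>
    Nat.prime_of_mem_primeFactors (Finset.mem_filter.mp hp).1
  -- primes in S are at least n - 1
  have hSlarge : ∀ p ∈ S, n - 1 ≤ p := by
    intro p hp
    obtain ⟨hp1, hcong⟩ := Finset.mem_filter.mp hp
    have hpp := Nat.prime_of_mem_primeFactors hp1
    have h2 := hpp.two_le
    rcases hcong with h | h
    · have h' : (p : ZMod n) = ((1 : ℕ) : ZMod n) := by simpa using h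
      have hmod : p % n = 1 % n := (ZMod.natCast_eq_natCast_iff _ _ _).mp h'
      have h1n : 1 % n = 1 := Nat.mod_eq_of_lt (by omega)
      rcases lt_or_ge p n with hlt | hle
      · rw [Nat.mod_eq_of_lt hlt] at hmod; omega
      · omega
    · have hcast : ((n - 1 : ℕ) : ZMod n) = -1 := by
        rw [Nat.cast_sub (by omega : 1 ≤ n), ZMod.natCast_self, Nat.cast_one, zero_sub]
      have h' : (p : ZMod n) = ((n - 1 : ℕ) : ZMod n) := by rw [h, hcast]
      have hmod : p % n = (n - 1) % n := (ZMod.natCast_eq_natCast_iff _ _ _).mp h'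
      have h1 : (n - 1) % n = n - 1 := Nat.mod_eq_of_lt (by omega)
      have := Nat.mod_le p n
      omega
  -- Legendre bound in ℕ
  have key : ∀ p : ℕ, p.Prime → ∀ M0 : ℕ, 0 < M0 →
      (p - 1) * (Nat.factorial M0).factorization p ≤ M0 - 1 := by
    intro p hp M0 hM0
    have h1 := hp.sub_one_mul_multiplicity_factorial (n := M0)
    rw [Nat.multiplicity_eq_factorization hp (Nat.factorial_ne_zero _)] at h1
    have hd : p.digits M0 ≠ [] := Nat.digits_ne_nil_iff_ne_zero.mpr hM0.ne'
    have hlast := Nat.getLast_digit_ne_zero p hM0.ne'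
    have hmem := List.getLast_mem hd
    have hsum : 1 ≤ (p.digits M0).sum :=
      le_trans (Nat.one_le_iff_ne_zero.mpr hlast)
        (List.single_le_sum (fun _ _ => Nat.zero_le _) _ hmem)
    omega
  -- real-valued per-prime bound
  have hreal : ∀ p : ℕ, p.Prime → ∀ i : Fin k,
      ((Nat.factorial (m i)).factorization p : ℝ) * Real.log p ≤
        ((m i : ℝ) - 1) * (Real.log p / ((p : ℝ) - 1)) := by
    intro p hpp i
    have h2 := hpp.two_le
    have hmi := hm1 i
    have hk1 := key p hpp (m i) (by omega)
    have hp1 : (0 : ℝ) < (p : ℝ) - 1 := by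
      have : (2 : ℝ) ≤ (p : ℝ) := by exact_mod_cast h2
      linarith
    have hlogp : 0 ≤ Real.log p := Real.log_nonneg (by exact_mod_cast Nat.one_le_of_lt h2)
    have hcast : ((p : ℝ) - 1) * ((Nat.factorial (m i)).factorization p : ℝ) ≤ (m i : ℝ) - 1 := by
      have := (Nat.cast_le (α := ℝ)).mpr hk1
      push_cast [Nat.cast_sub (by omega : 1 ≤ p), Nat.cast_sub (by omega : 1 ≤ m i)] at this
      convert this using 2 <;> push_cast <;> ring_nf
    have hv : ((Nat.factorial (m i)).factorization p : ℝ) ≤ ((m i : ℝ) - 1) / ((p : ℝ) - 1) :=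
      (le_div_iff₀ hp1).mpr (by linarith [hcast])
    calc ((Nat.factorial (m i)).factorization p : ℝ) * Real.log p
        ≤ (((m i : ℝ) - 1) / ((p : ℝ) - 1)) * Real.log p :=
          mul_le_mul_of_nonneg_right hv hlogp
      _ = ((m i : ℝ) - 1) * (Real.log p / ((p : ℝ) - 1)) := by ring
  have hNne : N ≠ 0 := by
    rw [hfac]; exact (Finset.prod_pos fun i _ => Nat.factorial_pos _).ne'
  -- log M as a sum
  have hlogM : Real.log M = ∑ p ∈ S, (N.factorization p : ℝ) * Real.log p := by
    rw [hM]
    push_cast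
    rw [Real.log_prod (fun p hp => pow_ne_zero _ (by
      exact_mod_cast (hSprime p hp).ne_zero))]
    exact Finset.sum_congr rfl fun p hp => Real.log_pow _ _
  have hfactorN : ∀ p : ℕ, N.factorization p = ∑ i : Fin k, (Nat.factorial (m i)).factorization p := by
    intro p
    rw [hfac, Nat.factorization_prod (fun i _ => hfacne i)]
    exact Finset.sum_apply' p
  calc Real.log M
      = ∑ p ∈ S, ∑ i : Fin k, ((Nat.factorial (m i)).factorization p : ℝ) * Real.log p := by
        rw [hlogM]
        refine Finset.sum_congr rfl fun p hp => ?_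
        rw [hfactorN p]
        push_cast
        rw [Finset.sum_mul]
    _ = ∑ i : Fin k, ∑ p ∈ S, ((Nat.factorial (m i)).factorization p : ℝ) * Real.log p :=
        Finset.sum_comm
    _ = ∑ i ∈ Finset.univ.filter (fun i => n - 1 ≤ m i),
          ∑ p ∈ S, ((Nat.factorial (m i)).factorization p : ℝ) * Real.log p := by
        refine (Finset.sum_filter_of_ne ?_).symm
        intro i _ hne
        by_contra hlt
        apply hne
        refine Finset.sum_eq_zero fun p hp => ?_
        have : m i < p := by have := hSlarge p hp; omega
        rw [Nat.factorization_factorial_eq_zero_of_lt this]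
        simp
    _ ≤ _ := by
        refine Finset.sum_le_sum fun i _ => ?_
        rw [Finset.mul_sum]
        set T := (Finset.range (m i + 1)).filter
            (fun p : ℕ => p.Prime ∧ ((p : ZMod n) = 1 ∨ (p : ZMod n) = -1)) with hTdef
        have hstep1 : ∑ p ∈ S, ((Nat.factorial (m i)).factorization p : ℝ) * Real.log p
            = ∑ p ∈ S.filter (fun p => p ∈ T), ((Nat.factorial (m i)).factorization p : ℝ) * Real.log p := by
          refine (Finset.sum_filter_of_ne ?_).symm
          intro p hp hne
          obtain ⟨hp1, hcong⟩ := Finset.mem_filter.mp hp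
          have hpp := Nat.prime_of_mem_primeFactors hp1
          by_contra hnotT
          apply hne
          have hple : ¬ p < m i + 1 := by
            intro hlt
            exact hnotT (Finset.mem_filter.mpr ⟨Finset.mem_range.mpr hlt, hpp, hcong⟩)
          rw [Nat.factorization_factorial_eq_zero_of_lt (by omega)]
          simp
        rw [hstep1]
        have hsub : S.filter (fun p => p ∈ T) ⊆ T := fun p hp => (Finset.mem_filter.mp hp).2
        refine le_trans (Finset.sum_le_sum fun p hp => hreal p
          (hSprime p (Finset.mem_filter.mp hp).1) i) ?_
        refine Finset.sum_le_sum_of_subset_of_nonneg hsub fun p hpT _ => ?_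
        have hpp : p.Prime := (Finset.mem_filter.mp hpT).2.1
        have h2 := hpp.two_le
        have hmi := hm1 i
        have hp1 : (0 : ℝ) ≤ (p : ℝ) - 1 := by
          have : (2 : ℝ) ≤ (p : ℝ) := by exact_mod_cast h2
          linarith
        have hm' : (0 : ℝ) ≤ (m i : ℝ) - 1 := by
          have : (1 : ℝ) ≤ (m i : ℝ) := by exact_mod_cast Nat.one_le_of_lt hmi
          linarith
        exact mul_nonneg hm' (div_nonneg
          (Real.log_nonneg (by exact_mod_cast Nat.one_le_of_lt h2)) hp1)
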